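/- arXiv:2601.05471 — 2 statements merged into one kernel-verified Lean document; each statement's English description precedes it below -/
import Mathlib

section
/- Let c₀ be a nonpositive integer and let a, b ∈ ℂ be such that c₀ − a − b is a positive integer, c₀ − b is a nonpositive integer, and c₀ − a is not a nonpositive integer. Then the Gamma-quotient Γ(c₀+ε) Γ(c₀−a−b+ε) / (Γ(c₀−a+ε) Γ(c₀−b+ε)) converges, as ε → 0 along nonzero complex ε, to a nonzero limit; explicitly, writing c₀ − b = −q with q a nonnegative integer, the limit equals ((−1)^{(−c₀)+q} · q!/(−c₀)!) · Γ(c₀−a−b)/Γ(c₀−a). (By the Gauss summation formula, this quotient represents the regularized value of the hypergeometric series ₂F₁(a, b; c₀+ε; 1), so this proves existence and non-vanishing of the regularized value ₂F₁(a, b; c₀; 1).) -/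
open Filter Finset

lemma myGamma_add_nat (z : ℂ) (n : ℕ) (hz : ∀ j : ℕ, j < n → z + j ≠ 0) :
    Complex.Gamma (z + n) = (∏ j ∈ Finset.range n, (z + j)) * Complex.Gamma z := by
  induction n with
  | zero => simp
  | succ n ih =>
      have h1 : z + (n + 1 : ℕ) = (z + n) + 1 := by push_cast; ring
      rw [h1, Complex.Gamma_add_one _ (hz n (Nat.lt_succ_self n)),
        ih (fun j hj => hz j (hj.trans (Nat.lt_succ_self n))), Finset.prod_range_succ]
      ring

lemma myprod_neg (n : ℕ) :
    (∏ j ∈ Finset.range n, ((j : ℂ) - n)) = (-1) ^ n * (Nat.factorial n : ℂ) := by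
  have : ∀ j ∈ Finset.range n, ((j : ℂ) - n) = -(((n - j : ℕ) : ℂ)) := by
    intro j hj
    rw [Finset.mem_range] at hj
    push_cast [Nat.cast_sub hj.le]
    ring
  rw [Finset.prod_congr rfl this,
    Finset.prod_congr rfl (fun x _ => (neg_one_mul (((n - x : ℕ) : ℂ))).symm),
    Finset.prod_mul_distrib, Finset.prod_const, Finset.card_range]
  congr 1
  rw [← Nat.cast_prod]
  congr 1
  rw [← Finset.prod_range_reflect]
  have : ∀ j ∈ Finset.range n, (n - (n - 1 - j)) = j + 1 := by
    intro j hj; rw [Finset.mem_range] at hj; omega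
  rw [Finset.prod_congr rfl this]
  exact Finset.prod_range_add_one_eq_factorial n

/-- Let `c₀` be a nonpositive integer and `a b : ℂ` with `c₀ - a - b` a positive integer,
`c₀ - b = -q` a nonpositive integer, and `c₀ - a` not a nonpositive integer.  Then the
Gamma-quotient `Γ(c₀+ε) Γ(c₀-a-b+ε) / (Γ(c₀-a+ε) Γ(c₀-b+ε))` converges, as `ε → 0` along
nonzero complex `ε`, to the nonzero limit
`((-1)^{(-c₀)+q} q!/(-c₀)!) · Γ(c₀-a-b)/Γ(c₀-a)`. -/
theorem regularized_gauss_value_exists_nonzero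
    (c₀ : ℤ) (hc : c₀ ≤ 0) (a b : ℂ)
    (p : ℕ) (hp : 0 < p) (hab : (c₀ : ℂ) - a - b = (p : ℂ))
    (q : ℕ) (hqb : (c₀ : ℂ) - b = -(q : ℂ))
    (ha : ∀ m : ℕ, (c₀ : ℂ) - a ≠ -(m : ℂ)) :
    Tendsto
        (fun ε : ℂ =>
          Complex.Gamma ((c₀ : ℂ) + ε) * Complex.Gamma ((c₀ : ℂ) - a - b + ε) /
            (Complex.Gamma ((c₀ : ℂ) - a + ε) * Complex.Gamma ((c₀ : ℂ) - b + ε)))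
        (nhdsWithin (0 : ℂ) {(0 : ℂ)}ᶜ)
        (nhds ((-1 : ℂ) ^ ((-c₀).toNat + q) * (Nat.factorial q : ℂ) /
            (Nat.factorial (-c₀).toNat : ℂ) *
            Complex.Gamma ((c₀ : ℂ) - a - b) / Complex.Gamma ((c₀ : ℂ) - a))) ∧
      (-1 : ℂ) ^ ((-c₀).toNat + q) * (Nat.factorial q : ℂ) /
          (Nat.factorial (-c₀).toNat : ℂ) *
          Complex.Gamma ((c₀ : ℂ) - a - b) / Complex.Gamma ((c₀ : ℂ) - a) ≠ 0 := by
  set n : ℕ := (-c₀).toNat with hn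
  have hc0 : (c₀ : ℂ) = -(n : ℂ) := by
    have h1 : c₀ = -(n : ℤ) := by omega
    rw [h1]; push_cast; ring
  have hGa : Complex.Gamma ((c₀ : ℂ) - a) ≠ 0 := Complex.Gamma_ne_zero ha
  have hp' : ∀ m : ℕ, ((c₀ : ℂ) - a - b) ≠ -(m : ℂ) := by
    intro m h
    rw [hab] at h
    have h2 : ((p + m : ℕ) : ℂ) = 0 := by push_cast; rw [h]; ring
    have := Nat.cast_eq_zero.mp h2
    omega
  have hGp : Complex.Gamma ((c₀ : ℂ) - a - b) ≠ 0 := Complex.Gamma_ne_zero hp'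
  have hfacn : ((Nat.factorial n : ℕ) : ℂ) ≠ 0 := Nat.cast_ne_zero.mpr (Nat.factorial_ne_zero n)
  have hfacq : ((Nat.factorial q : ℕ) : ℂ) ≠ 0 := Nat.cast_ne_zero.mpr (Nat.factorial_ne_zero q)
  have hneg1 : ∀ k : ℕ, ((-1 : ℂ)) ^ k ≠ 0 := fun k => pow_ne_zero k (by norm_num)
  constructor
  · -- the limit statement
    set g : ℂ → ℂ := fun ε =>
      (∏ j ∈ Finset.range q, (ε - q + j)) / (∏ j ∈ Finset.range n, (ε - n + j)) *
        (Complex.Gamma ((c₀ : ℂ) - a - b + ε) / Complex.Gamma ((c₀ : ℂ) - a + ε)) with hg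
    have hEq : g =ᶠ[nhdsWithin (0 : ℂ) {(0 : ℂ)}ᶜ]
        (fun ε : ℂ =>
          Complex.Gamma ((c₀ : ℂ) + ε) * Complex.Gamma ((c₀ : ℂ) - a - b + ε) /
            (Complex.Gamma ((c₀ : ℂ) - a + ε) * Complex.Gamma ((c₀ : ℂ) - b + ε))) := by
      have hmem : Metric.ball (0 : ℂ) 1 ∩ {(0 : ℂ)}ᶜ ∈ nhdsWithin (0 : ℂ) {(0 : ℂ)}ᶜ :=
        Filter.inter_mem (mem_nhdsWithin_of_mem_nhds (Metric.ball_mem_nhds _ one_pos))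
          self_mem_nhdsWithin
      filter_upwards [hmem] with ε hε
      obtain ⟨hball, hne0'⟩ := hε
      have hε0 : ε ≠ 0 := hne0'
      have hsmall : ‖ε‖ < 1 := by simpa using Metric.mem_ball.mp hball
      have key : ∀ m : ℕ, ε ≠ (m : ℂ) := by
        intro m h
        rcases Nat.eq_zero_or_pos m with rfl | hm
        · exact hε0 (by simpa using h)
        · have h1 : (1 : ℝ) ≤ ‖ε‖ := by
            rw [h, Complex.norm_natCast]; exact_mod_cast hm
          linarith
      have key' : ∀ m : ℕ, ε + 1 ≠ -(m : ℂ) := by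
        intro m h
        have h2 : ε = -(((m + 1 : ℕ)) : ℂ) := by push_cast; linear_combination h
        have h3 : (1 : ℝ) ≤ ‖ε‖ := by
          rw [h2, norm_neg, Complex.norm_natCast]
          exact_mod_cast Nat.succ_le_succ (Nat.zero_le m)
        linarith
      have hGone : Complex.Gamma (ε + 1) ≠ 0 := Complex.Gamma_ne_zero key'
      have hzgen : ∀ k : ℕ, ∀ j : ℕ, j < k + 1 → (ε - (k : ℂ)) + j ≠ 0 := by
        intro k j hj h
        apply key (k - j)
        push_cast [Nat.cast_sub (Nat.lt_succ_iff.mp hj)]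
        linear_combination h
      have hshift : ∀ k : ℕ, Complex.Gamma (ε - k) =
          Complex.Gamma (ε + 1) / ((∏ j ∈ Finset.range k, ((ε - k) + j)) * ε) := by
        intro k
        have h1 := myGamma_add_nat (ε - (k : ℂ)) (k + 1) (hzgen k)
        have harg : (ε - (k : ℂ)) + ((k + 1 : ℕ) : ℂ) = ε + 1 := by push_cast; ring
        rw [harg, Finset.prod_range_succ] at h1
        have h2 : (ε - (k : ℂ)) + (k : ℂ) = ε := by ring
        rw [h2] at h1
        rw [eq_div_iff (mul_ne_zero
          (Finset.prod_ne_zero_iff.mpr fun j hj =>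
            hzgen k j ((Finset.mem_range.mp hj).trans (Nat.lt_succ_self k))) hε0)]
        rw [h1]; ring
      have hQ : ∀ k : ℕ, (∏ j ∈ Finset.range k, ((ε - k) + j)) ≠ 0 := fun k =>
        Finset.prod_ne_zero_iff.mpr fun j hj =>
          hzgen k j ((Finset.mem_range.mp hj).trans (Nat.lt_succ_self k))
      have e1 : (c₀ : ℂ) + ε = ε - n := by rw [hc0]; ring
      have e2 : (c₀ : ℂ) - b + ε = ε - q := by rw [hqb]; ring
      simp only [hg, e1, e2, hshift]
      rcases eq_or_ne (Complex.Gamma ((c₀ : ℂ) - a + ε)) 0 with hY | hY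
      · simp [hY]
      · field_simp [hGone, hQ n, hQ q, hε0, hY]
    have hlim : Tendsto g (nhdsWithin (0 : ℂ) {(0 : ℂ)}ᶜ)
        (nhds ((-1 : ℂ) ^ (n + q) * (Nat.factorial q : ℂ) /
            (Nat.factorial n : ℂ) *
            Complex.Gamma ((c₀ : ℂ) - a - b) / Complex.Gamma ((c₀ : ℂ) - a))) := by
      have cprod : ∀ k : ℕ, Continuous (fun ε : ℂ => ∏ j ∈ Finset.range k, (ε - k + j)) :=
        fun k => continuous_finset_prod _ fun j _ => by continuity
      have cgam : ∀ X : ℂ, (∀ m : ℕ, X ≠ -(m : ℂ)) →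
          Tendsto (fun ε : ℂ => Complex.Gamma (X + ε)) (nhds 0) (nhds (Complex.Gamma X)) := by
        intro X hX
        have h1 : ContinuousAt Complex.Gamma X := (Complex.differentiableAt_Gamma X hX).continuousAt
        have h2 : Tendsto (fun ε : ℂ => X + ε) (nhds 0) (nhds X) := by
          simpa using (continuous_add_left X).tendsto (0 : ℂ)
        exact h1.tendsto.comp h2
      have hprodval : ∀ k : ℕ, (∏ j ∈ Finset.range k, ((0 : ℂ) - k + j)) =
          (-1) ^ k * (Nat.factorial k : ℂ) := by
        intro k
        rw [← myprod_neg k]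
        exact Finset.prod_congr rfl fun j _ => by ring
      have h1 : Tendsto g (nhds 0)
          (nhds (((-1 : ℂ) ^ q * (Nat.factorial q : ℂ)) / ((-1 : ℂ) ^ n * (Nat.factorial n : ℂ)) *
            (Complex.Gamma ((c₀ : ℂ) - a - b) / Complex.Gamma ((c₀ : ℂ) - a)))) := by
        rw [hg]
        refine Tendsto.mul (Tendsto.div ?_ ?_ ?_) (Tendsto.div (cgam _ hp') (cgam _ ha) hGa)
        · have := ((cprod q).tendsto 0); rw [hprodval q] at this; exact this
        · have := ((cprod n).tendsto 0); rw [hprodval n] at this; exact this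
        · exact mul_ne_zero (hneg1 n) hfacn
      have hvals : ((-1 : ℂ) ^ q * (Nat.factorial q : ℂ)) /
            ((-1 : ℂ) ^ n * (Nat.factorial n : ℂ)) *
            (Complex.Gamma ((c₀ : ℂ) - a - b) / Complex.Gamma ((c₀ : ℂ) - a)) =
          (-1 : ℂ) ^ (n + q) * (Nat.factorial q : ℂ) / (Nat.factorial n : ℂ) *
            Complex.Gamma ((c₀ : ℂ) - a - b) / Complex.Gamma ((c₀ : ℂ) - a) := by
        have hsq : ((-1 : ℂ) ^ n) * ((-1 : ℂ) ^ n) = 1 := by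
          rw [← pow_add, ← two_mul, pow_mul]; norm_num
        have key : ((-1 : ℂ) ^ q) / ((-1 : ℂ) ^ n) = (-1 : ℂ) ^ (n + q) := by
          rw [div_eq_iff (hneg1 n), pow_add]
          linear_combination (-(1 : ℂ)) * (-1 : ℂ) ^ q * hsq
        rw [← key]
        field_simp
      rw [← hvals]
      exact h1.mono_left nhdsWithin_le_nhds
    exact Filter.Tendsto.congr' hEq hlim
  · -- nonvanishing
    apply div_ne_zero _ hGa
    apply mul_ne_zero _ hGp
    apply div_ne_zero (mul_ne_zero (hneg1 _) hfacq) hfacn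
end

section
/- Let k and n be positive integers with n ≥ k. Then |SST(δ_k, n)| ≠ 0 and, as an identity of rational numbers, |SST(δ_{k+1}, n)| / |SST(δ_k, n)| = (2^{2k} (k!)² / (2k)!) · P_k^{(α,β)}(−1), where α = (n−k−1)/2 and β = (−n−k−1)/2. -/
open Finset

namespace SSTwork

def Box (lam : ℕ → ℕ) (p : ℕ × ℕ) : Prop := 1 ≤ p.1 ∧ 1 ≤ p.2 ∧ p.2 ≤ lam p.1
instance (lam : ℕ → ℕ) (p : ℕ × ℕ) : Decidable (Box lam p) := by unfold Box; infer_instance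
def IsSST (lam : ℕ → ℕ) (n : ℕ) (T : ℕ × ℕ → ℕ) : Prop :=
  (∀ p, Box lam p → 1 ≤ T p ∧ T p ≤ n) ∧
  (∀ p, ¬ Box lam p → T p = 0) ∧
  (∀ p q, Box lam p → Box lam q → q.1 = p.1 → q.2 = p.2 + 1 → T p ≤ T q) ∧
  (∀ p q, Box lam p → Box lam q → q.1 = p.1 + 1 → q.2 = p.2 → T p < T q)

noncomputable def cnt (lam : ℕ → ℕ) (n : ℕ) : ℕ := Nat.card {T : ℕ × ℕ → ℕ // IsSST lam n T}

lemma sst_le (lam n) {T} (hT : IsSST lam n T) (p : ℕ × ℕ) : T p ≤ n := by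
  by_cases hb : Box lam p
  · exact (hT.1 p hb).2
  · simp [hT.2.1 p hb]

lemma finite_sst (lam : ℕ → ℕ) (n : ℕ) (hS : ∀ i, n < i → lam i = 0) :
    Finite {T : ℕ × ℕ → ℕ // IsSST lam n T} := by
  classical
  set L := (Finset.range (n+1)).sup lam with hL
  set s : Finset (ℕ × ℕ) := Finset.range (n+1) ×ˢ Finset.range (L+1) with hs
  apply Finite.of_injective
    (f := fun T : {T : ℕ × ℕ → ℕ // IsSST lam n T} =>
      (fun p : s => (⟨T.1 p, Nat.lt_succ_of_le (sst_le lam n T.2 p)⟩ : Fin (n+1))))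
  intro T1 T2 h
  apply Subtype.ext; funext p
  by_cases hb : Box lam p
  · have h1 : p.1 ≤ n := by
      by_contra hgt
      have := hS p.1 (by omega)
      rcases hb with ⟨_, h2, h3⟩; omega
    have h2 : p.2 ≤ L := by
      refine le_trans hb.2.2 ?_
      exact Finset.le_sup (by simp [Finset.mem_range]; omega)
    have hp : p ∈ s := by
      simp [hs, Finset.mem_product, Finset.mem_range]; omega
    have := congrFun h ⟨p, hp⟩
    simpa using congrArg Fin.val this
  · rw [T1.2.2.1 p hb, T2.2.2.1 p hb]

lemma cnt_zero (lam : ℕ → ℕ) (hS : ∀ i, 1 ≤ i → lam i = 0) : cnt lam 0 = 1 := by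
  have hnb : ∀ p, ¬ Box lam p := by
    rintro ⟨i, j⟩ ⟨h1, h2, h3⟩
    have := hS i h1; simp at h3; omega
  have h0 : IsSST lam 0 (fun _ => 0) :=
    ⟨fun p hp => absurd hp (hnb p), fun p _ => rfl,
      fun p q hp => absurd hp (hnb p), fun p q hp => absurd hp (hnb p)⟩
  rw [cnt, Nat.card_eq_one_iff_unique]
  refine ⟨⟨fun T1 T2 => ?_⟩, ⟨⟨_, h0⟩⟩⟩
  apply Subtype.ext; funext p
  rw [T1.2.2.1 p (hnb p), T2.2.2.1 p (hnb p)]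

/-- a downward closed subset of `Icc 1 m` is `Icc 1 card`. -/
lemma down_closed_eq_Icc (s : Finset ℕ) (m : ℕ) (hsub : s ⊆ Finset.Icc 1 m)
    (hdc : ∀ j ∈ s, ∀ j', 1 ≤ j' → j' ≤ j → j' ∈ s) : s = Finset.Icc 1 s.card := by
  rcases eq_or_ne s ∅ with h | h
  · simp [h]
  · have hne : s.Nonempty := nonempty_iff_ne_empty.2 h
    have hmax : s = Finset.Icc 1 (s.max' hne) := by
      ext j
      simp only [Finset.mem_Icc]
      constructor
      · intro hj
        exact ⟨(Finset.mem_Icc.1 (hsub hj)).1, Finset.le_max' s j hj⟩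
      · rintro ⟨h1, h2⟩
        exact hdc _ (s.max'_mem hne) j h1 h2
    have hcard : s.card = s.max' hne := by
      conv_lhs => rw [hmax]
      simp [Nat.card_Icc]
    rw [hcard, ← hmax]

section
variable {lam : ℕ → ℕ} {n : ℕ} {T : ℕ × ℕ → ℕ}

lemma row_chain (hT : IsSST lam n T) :
    ∀ (r j' : ℕ), 1 ≤ j' → ∀ j, j' ≤ j → Box lam (r, j) → T (r, j') ≤ T (r, j) := by
  intro r j' hj'
  refine Nat.le_induction ?_ ?_
  · intro _; exact le_refl _
  · intro j hj ih hbox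
    have h3 : j + 1 ≤ lam r := hbox.2.2
    have hbj : Box lam (r, j) := ⟨hbox.1, by omega, by show j ≤ lam r; omega⟩
    exact le_trans (ih hbj) (hT.2.2.1 (r, j) (r, j+1) hbj hbox rfl rfl)

lemma row_ge (hA : ∀ i, 1 ≤ i → lam (i+1) ≤ lam i) (hT : IsSST lam n T) :
    ∀ (r j : ℕ), Box lam (r, j) → r ≤ T (r, j) := by
  intro r
  induction r with
  | zero => intro j _; omega
  | succ r ih =>
    intro j hbox
    rcases Nat.eq_zero_or_pos r with h | h
    · subst h; exact (hT.1 _ hbox).1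
    · have h3 : j ≤ lam (r+1) := hbox.2.2
      have hbr : Box lam (r, j) := ⟨by omega, hbox.2.1, by show j ≤ lam r; exact le_trans h3 (hA r h)⟩
      have h4 := hT.2.2.2 (r, j) (r+1, j) hbr hbox rfl rfl
      have h5 := ih j hbr
      omega

end

/-! ### strips and branching -/

def strip (lam : ℕ → ℕ) (n : ℕ) (T : ℕ × ℕ → ℕ) (r : ℕ) : ℕ :=
  ((Finset.Icc 1 (lam r)).filter (fun j => T (r, j) ≤ n)).card

def toShape (n : ℕ) (y : Fin n → ℕ) : ℕ → ℕ := fun r =>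
  if h : 1 ≤ r ∧ r ≤ n then y ⟨r - 1, by omega⟩ else 0

def ytuple (lam : ℕ → ℕ) (n : ℕ) (T : ℕ × ℕ → ℕ) : Fin n → ℕ :=
  fun i => strip lam n T ((i : ℕ) + 1)

lemma toShape_pos (n : ℕ) (y : Fin n → ℕ) (r : ℕ) (h1 : 1 ≤ r) (h2 : r ≤ n) :
    toShape n y r = y ⟨r - 1, by omega⟩ := dif_pos ⟨h1, h2⟩

lemma toShape_zero (n : ℕ) (y : Fin n → ℕ) (r : ℕ) (h : ¬ (1 ≤ r ∧ r ≤ n)) :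
    toShape n y r = 0 := dif_neg h

section branchsec
variable {lam : ℕ → ℕ} {n : ℕ} {T : ℕ × ℕ → ℕ}
variable (hA : ∀ i, 1 ≤ i → lam (i+1) ≤ lam i) (hS : ∀ i, n + 1 < i → lam i = 0)

lemma strip_le (r : ℕ) : strip lam n T r ≤ lam r := by
  refine le_trans (Finset.card_filter_le _ _) ?_
  simp [Nat.card_Icc]

lemma filter_eq (hT : IsSST lam (n+1) T) (r : ℕ) (hr : 1 ≤ r) :
    (Finset.Icc 1 (lam r)).filter (fun j => T (r, j) ≤ n) = Finset.Icc 1 (strip lam n T r) := by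
  apply down_closed_eq_Icc _ (lam r) (Finset.filter_subset _ _)
  intro j hj j' h1 h2
  rw [Finset.mem_filter, Finset.mem_Icc] at hj ⊢
  refine ⟨⟨h1, by omega⟩, ?_⟩
  exact le_trans (row_chain hT r j' h1 j h2 ⟨hr, by omega, hj.1.2⟩) hj.2

lemma strip_iff (hT : IsSST lam (n+1) T) (r j : ℕ) (hr : 1 ≤ r) (hj : 1 ≤ j)
    (hjl : j ≤ lam r) : (T (r, j) ≤ n ↔ j ≤ strip lam n T r) := by
  have h1 : j ∈ Finset.Icc 1 (lam r) := Finset.mem_Icc.2 ⟨hj, hjl⟩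
  constructor
  · intro h
    have : j ∈ (Finset.Icc 1 (lam r)).filter (fun j => T (r, j) ≤ n) :=
      Finset.mem_filter.2 ⟨h1, h⟩
    rw [filter_eq hT r hr, Finset.mem_Icc] at this
    exact this.2
  · intro h
    have : j ∈ (Finset.Icc 1 (lam r)).filter (fun j => T (r, j) ≤ n) := by
      rw [filter_eq hT r hr, Finset.mem_Icc]; exact ⟨hj, h⟩
    exact (Finset.mem_filter.1 this).2

include hA in
lemma strip_lb (hT : IsSST lam (n+1) T) (r : ℕ) (hr : 1 ≤ r) :
    lam (r+1) ≤ strip lam n T r := by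
  have hsub : Finset.Icc 1 (lam (r+1)) ⊆
      (Finset.Icc 1 (lam r)).filter (fun j => T (r, j) ≤ n) := by
    intro j hj
    rw [Finset.mem_Icc] at hj
    have hq : Box lam (r+1, j) := ⟨by omega, hj.1, hj.2⟩
    have hp : Box lam (r, j) := ⟨hr, hj.1, le_trans hj.2 (hA r hr)⟩
    have hlt := hT.2.2.2 (r, j) (r+1, j) hp hq rfl rfl
    have hle := (hT.1 _ hq).2
    exact Finset.mem_filter.2 ⟨Finset.mem_Icc.2 ⟨hj.1, hp.2.2⟩, by omega⟩
  have := Finset.card_le_card hsub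
  simpa [strip, Nat.card_Icc] using this

include hA hS in
lemma strip_gt (hT : IsSST lam (n+1) T) (r : ℕ) (hr : n < r) : strip lam n T r = 0 := by
  rcases Nat.lt_or_ge (n+1) r with h | h
  · simp [strip, hS r h]
  · have hr' : r = n + 1 := by omega
    subst hr'
    rw [strip, Finset.card_eq_zero, Finset.filter_eq_empty_iff]
    intro j hj
    rw [Finset.mem_Icc] at hj
    have hbox : Box lam (n+1, j) := ⟨by omega, hj.1, hj.2⟩
    have := row_ge hA hT (n+1) j hbox
    omega

end branchsec

/-! ### restriction and extension -/

def restrT (nu : ℕ → ℕ) (T : ℕ × ℕ → ℕ) : ℕ × ℕ → ℕ :=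
  fun p => if Box nu p then T p else 0

def extnd (lam nu : ℕ → ℕ) (n : ℕ) (T' : ℕ × ℕ → ℕ) : ℕ × ℕ → ℕ :=
  fun p => if Box lam p then (if Box nu p then T' p else n + 1) else 0

def mu (lam : ℕ → ℕ) (n : ℕ) (T : ℕ × ℕ → ℕ) : ℕ → ℕ := toShape n (ytuple lam n T)

lemma restrT_apply (nu : ℕ → ℕ) (T : ℕ × ℕ → ℕ) (p : ℕ × ℕ) :
    restrT nu T p = if Box nu p then T p else 0 := rfl

lemma extnd_apply (lam nu : ℕ → ℕ) (n : ℕ) (T' : ℕ × ℕ → ℕ) (p : ℕ × ℕ) :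
    extnd lam nu n T' p = if Box lam p then (if Box nu p then T' p else n + 1) else 0 := rfl

section restrext
variable {lam nu : ℕ → ℕ} {n : ℕ}

lemma restr_isSST {T : ℕ × ℕ → ℕ} (hT : IsSST lam (n+1) T)
    (hsub : ∀ p, Box nu p → Box lam p) (hten : ∀ p, Box nu p → T p ≤ n) :
    IsSST nu n (restrT nu T) := by
  refine ⟨?_, ?_, ?_, ?_⟩
  · intro p hp
    rw [restrT_apply, if_pos hp]
    exact ⟨(hT.1 p (hsub p hp)).1, hten p hp⟩
  · intro p hp; rw [restrT_apply, if_neg hp]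
  · intro p q hp hq e1 e2
    rw [restrT_apply, restrT_apply, if_pos hp, if_pos hq]
    exact hT.2.2.1 p q (hsub p hp) (hsub q hq) e1 e2
  · intro p q hp hq e1 e2
    rw [restrT_apply, restrT_apply, if_pos hp, if_pos hq]
    exact hT.2.2.2 p q (hsub p hp) (hsub q hq) e1 e2

lemma extnd_isSST {T' : ℕ × ℕ → ℕ} (hT' : IsSST nu n T')
    (hsub : ∀ p, Box nu p → Box lam p)
    (hlow : ∀ r j, Box lam (r+1, j) → 1 ≤ r → j ≤ nu r) :
    IsSST lam (n+1) (extnd lam nu n T') := by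
  have hval : ∀ p, Box lam p → extnd lam nu n T' p ≤ n + 1 := by
    intro p hp
    rw [extnd_apply, if_pos hp]
    by_cases hq : Box nu p
    · rw [if_pos hq]; exact le_trans (hT'.1 p hq).2 (by omega)
    · rw [if_neg hq]
  refine ⟨?_, ?_, ?_, ?_⟩
  · intro p hp
    refine ⟨?_, hval p hp⟩
    rw [extnd_apply, if_pos hp]
    by_cases hq : Box nu p
    · rw [if_pos hq]; exact (hT'.1 p hq).1
    · rw [if_neg hq]; omega
  · intro p hp; rw [extnd_apply, if_neg hp]
  · intro p q hp hq e1 e2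
    have hq' : q = (p.1, p.2 + 1) := Prod.ext e1 e2
    subst hq'
    obtain ⟨r, j⟩ := p
    have hq2 : Box lam (r, j + 1) := hq
    show extnd lam nu n T' (r, j) ≤ extnd lam nu n T' (r, j + 1)
    by_cases hbq : Box nu (r, j+1)
    · have hj1 : 1 ≤ j := hp.2.1
      have hj2 : j + 1 ≤ nu r := hbq.2.2
      have hbp : Box nu (r, j) := ⟨hbq.1, hj1, by show j ≤ nu r; omega⟩
      rw [extnd_apply, extnd_apply, if_pos hp, if_pos hq2, if_pos hbp, if_pos hbq]
      exact hT'.2.2.1 (r, j) (r, j+1) hbp hbq rfl rfl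
    · have h2 : extnd lam nu n T' (r, j+1) = n + 1 := by
        rw [extnd_apply, if_pos hq2, if_neg hbq]
      rw [h2]
      exact hval _ hp
  · intro p q hp hq e1 e2
    have hq' : q = (p.1 + 1, p.2) := Prod.ext e1 e2
    subst hq'
    obtain ⟨r, j⟩ := p
    have hq2 : Box lam (r + 1, j) := hq
    show extnd lam nu n T' (r, j) < extnd lam nu n T' (r + 1, j)
    have hbp : Box nu (r, j) := ⟨hp.1, hp.2.1, hlow r j hq2 hp.1⟩
    have hTp : extnd lam nu n T' (r, j) = T' (r, j) := by
      rw [extnd_apply, if_pos hp, if_pos hbp]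
    by_cases hbq : Box nu (r+1, j)
    · rw [hTp, extnd_apply, if_pos hq2, if_pos hbq]
      exact hT'.2.2.2 (r, j) (r+1, j) hbp hbq rfl rfl
    · rw [hTp, extnd_apply, if_pos hq2, if_neg hbq]
      have h3 := (hT'.1 _ hbp).2
      omega

end restrext

section branchmain
variable {lam : ℕ → ℕ} {n : ℕ}
variable (hA : ∀ i, 1 ≤ i → lam (i+1) ≤ lam i) (hS : ∀ i, n + 1 < i → lam i = 0)

/-- shape bounds for `toShape n y` when `y` interlaces `lam`. -/
lemma nu_le {y : Fin n → ℕ} (hy : ∀ i : Fin n, lam ((i:ℕ)+2) ≤ y i ∧ y i ≤ lam ((i:ℕ)+1))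
    (r : ℕ) (h1 : 1 ≤ r) (h2 : r ≤ n) : toShape n y r ≤ lam r := by
  rw [toShape_pos n y r h1 h2]
  have := (hy ⟨r - 1, by omega⟩).2
  have he : r - 1 + 1 = r := by omega
  rwa [he] at this

lemma nu_lb {y : Fin n → ℕ} (hy : ∀ i : Fin n, lam ((i:ℕ)+2) ≤ y i ∧ y i ≤ lam ((i:ℕ)+1))
    (r : ℕ) (h1 : 1 ≤ r) (h2 : r ≤ n) : lam (r+1) ≤ toShape n y r := by
  rw [toShape_pos n y r h1 h2]
  have := (hy ⟨r - 1, by omega⟩).1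
  have he : r - 1 + 2 = r + 1 := by omega
  rwa [he] at this

lemma box_nu_sub {y : Fin n → ℕ}
    (hy : ∀ i : Fin n, lam ((i:ℕ)+2) ≤ y i ∧ y i ≤ lam ((i:ℕ)+1)) :
    ∀ p, Box (toShape n y) p → Box lam p := by
  rintro ⟨r, j⟩ ⟨h1, h2, h3⟩
  by_cases hr : 1 ≤ r ∧ r ≤ n
  · refine ⟨h1, h2, ?_⟩
    show j ≤ lam r
    have h4 : j ≤ toShape n y r := h3
    have := nu_le hy r hr.1 hr.2
    omega
  · have h0 : toShape n y r = 0 := toShape_zero n y r hr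
    have h4 : j ≤ toShape n y r := h3
    omega

include hS in
lemma nu_low {y : Fin n → ℕ}
    (hy : ∀ i : Fin n, lam ((i:ℕ)+2) ≤ y i ∧ y i ≤ lam ((i:ℕ)+1)) :
    ∀ r j, Box lam (r+1, j) → 1 ≤ r → j ≤ toShape n y r := by
  intro r j hb h1
  have h2 : j ≤ lam (r+1) := hb.2.2
  have h3 : 1 ≤ lam (r+1) := by have := hb.2.1; omega
  have hr2 : r ≤ n := by
    by_contra hc
    have := hS (r+1) (by omega)
    omega
  exact le_trans h2 (nu_lb hy r h1 hr2)

include hA hS in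
lemma branch : cnt lam (n+1) =
    ∑ y ∈ Fintype.piFinset
      (fun i : Fin n => Finset.Icc (lam ((i:ℕ)+2)) (lam ((i:ℕ)+1))),
      cnt (toShape n y) n := by
  classical
  haveI F1 : Finite {T : ℕ × ℕ → ℕ // IsSST lam (n+1) T} := finite_sst lam (n+1) hS
  haveI := Fintype.ofFinite {T : ℕ × ℕ → ℕ // IsSST lam (n+1) T}
  have himg : ∀ T : {T : ℕ × ℕ → ℕ // IsSST lam (n+1) T}, T ∈ Finset.univ →
      ytuple lam n T.1 ∈ Fintype.piFinset
        (fun i : Fin n => Finset.Icc (lam ((i:ℕ)+2)) (lam ((i:ℕ)+1))) := by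
    intro T _
    rw [Fintype.mem_piFinset]
    intro i
    rw [Finset.mem_Icc]
    exact ⟨strip_lb hA T.2 ((i:ℕ)+1) (by omega), strip_le _⟩
  rw [cnt, Nat.card_eq_fintype_card, ← Finset.card_univ,
    Finset.card_eq_sum_card_fiberwise himg]
  refine Finset.sum_congr rfl ?_
  intro y hy
  rw [Fintype.mem_piFinset] at hy
  have hy' : ∀ i : Fin n, lam ((i:ℕ)+2) ≤ y i ∧ y i ≤ lam ((i:ℕ)+1) := by
    intro i; have := hy i; rwa [Finset.mem_Icc] at this
  -- the fiber over y is equivalent to SSTs of shape `toShape n y`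
  have e : {T : {T : ℕ × ℕ → ℕ // IsSST lam (n+1) T} // ytuple lam n T.1 = y} ≃
      {T' : ℕ × ℕ → ℕ // IsSST (toShape n y) n T'} := by
    refine ⟨fun T => ⟨restrT (toShape n y) T.1.1, ?_⟩,
      fun T' => ⟨⟨extnd lam (toShape n y) n T'.1,
        extnd_isSST T'.2 (box_nu_sub hy') (nu_low hS hy')⟩, ?_⟩, ?_, ?_⟩
    · -- restriction is an SST of shape toShape n y
      refine restr_isSST T.1.2 (box_nu_sub hy') ?_
      rintro ⟨r, j⟩ hp
      by_cases hr : 1 ≤ r ∧ r ≤ n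
      · have h4 : j ≤ toShape n y r := hp.2.2
        rw [toShape_pos n y r hr.1 hr.2] at h4
        have hyr : y ⟨r - 1, by omega⟩ = strip lam n T.1.1 r := by
          have h5 := congrFun T.2 (⟨r - 1, by omega⟩ : Fin n)
          have h6 : strip lam n T.1.1 ((r - 1) + 1) = strip lam n T.1.1 r := by
            congr 1; omega
          exact h5.symm.trans h6
        rw [hyr] at h4
        have hjl : j ≤ lam r := by
          have := strip_le (lam := lam) (n := n) (T := T.1.1) r; omega
        exact (strip_iff T.1.2 r j hr.1 hp.2.1 hjl).2 h4
      · have h0 : toShape n y r = 0 := toShape_zero n y r hr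
        have h4 : j ≤ toShape n y r := hp.2.2
        have := hp.2.1
        omega
    · -- the strip of the extension is y
      funext i
      show strip lam n (extnd lam (toShape n y) n T'.1) ((i:ℕ)+1) = y i
      have h1 : 1 ≤ (i:ℕ)+1 := by omega
      have h2 : (i:ℕ)+1 ≤ n := by omega
      have hfe : (Finset.Icc 1 (lam ((i:ℕ)+1))).filter
          (fun j => extnd lam (toShape n y) n T'.1 ((i:ℕ)+1, j) ≤ n)
          = Finset.Icc 1 (toShape n y ((i:ℕ)+1)) := by
        ext j
        rw [Finset.mem_filter, Finset.mem_Icc, Finset.mem_Icc]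
        constructor
        · rintro ⟨⟨hj1, hj2⟩, hj3⟩
          refine ⟨hj1, ?_⟩
          by_contra hc
          have hbp : Box lam ((i:ℕ)+1, j) := ⟨h1, hj1, hj2⟩
          have hnq : ¬ Box (toShape n y) ((i:ℕ)+1, j) := by
            rintro ⟨_, _, h⟩
            exact hc h
          rw [extnd_apply, if_pos hbp, if_neg hnq] at hj3
          omega
        · rintro ⟨hj1, hj2⟩
          have hbq : Box (toShape n y) ((i:ℕ)+1, j) := ⟨h1, hj1, hj2⟩
          have hbp : Box lam ((i:ℕ)+1, j) := box_nu_sub hy' _ hbq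
          refine ⟨⟨hj1, hbp.2.2⟩, ?_⟩
          rw [extnd_apply, if_pos hbp, if_pos hbq]
          exact (T'.2.1 _ hbq).2
      rw [strip, hfe]
      rw [toShape_pos n y ((i:ℕ)+1) h1 h2]
      simp [Nat.card_Icc]
    · -- left inverse
      intro T
      apply Subtype.ext; apply Subtype.ext; funext p
      show extnd lam (toShape n y) n (restrT (toShape n y) T.1.1) p = T.1.1 p
      have hmu : toShape n y = mu lam n T.1.1 := by rw [mu, T.2]
      by_cases hbp : Box lam p
      · by_cases hbq : Box (toShape n y) p
        · rw [extnd_apply, if_pos hbp, if_pos hbq, restrT_apply, if_pos hbq]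
        · obtain ⟨r, j⟩ := p
          rw [extnd_apply, if_pos hbp, if_neg hbq]
          have hr1 : 1 ≤ r := hbp.1
          have hj1 : 1 ≤ j := hbp.2.1
          have hjl : j ≤ lam r := hbp.2.2
          have h1 : T.1.1 (r, j) ≤ n + 1 := (T.1.2.1 _ hbp).2
          by_contra hne
          have hle : T.1.1 (r, j) ≤ n := by omega
          have hrn : r ≤ n := by
            rcases Nat.lt_or_ge n r with hgt | hok
            · rcases Nat.lt_or_ge (n+1) r with hgt2 | hok2
              · have := hS r hgt2
                omega
              · have hr' : r = n + 1 := by omega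
                subst hr'
                have h7 := row_ge hA T.1.2 (n+1) j hbp
                omega
            · exact hok
          apply hbq
          refine ⟨hr1, hj1, ?_⟩
          show j ≤ toShape n y r
          rw [hmu, mu, toShape_pos n _ r hr1 hrn]
          have hyr : ytuple lam n T.1.1 ⟨r - 1, by omega⟩ = strip lam n T.1.1 r := by
            show strip lam n T.1.1 ((r - 1) + 1) = _
            congr 1; omega
          rw [hyr]
          exact (strip_iff T.1.2 r j hr1 hj1 hjl).1 hle
      · rw [extnd_apply, if_neg hbp, T.1.2.2.1 p hbp]
    · -- right inverse
      intro T'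
      apply Subtype.ext; funext p
      show restrT (toShape n y) (extnd lam (toShape n y) n T'.1) p = T'.1 p
      by_cases hbq : Box (toShape n y) p
      · rw [restrT_apply, if_pos hbq, extnd_apply, if_pos (box_nu_sub hy' p hbq), if_pos hbq]
      · rw [restrT_apply, if_neg hbq, T'.2.2.1 p hbq]
  haveI : Finite {T' : ℕ × ℕ → ℕ // IsSST (toShape n y) n T'} := by
    apply finite_sst
    intro i hi
    apply toShape_zero
    omega
  rw [← Fintype.card_subtype]
  rw [← Nat.card_eq_fintype_card, Nat.card_congr e, cnt]

end branchmain

/-! ### determinant identities -/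
section det
open Polynomial


def Bq (j : ℕ) (t : ℚ) : ℚ := ∏ s ∈ Finset.range j, (t - s)

@[simp] lemma Bq_zero (t : ℚ) : Bq 0 t = 1 := by simp [Bq]

lemma Bq_succ_top (j : ℕ) (t : ℚ) : Bq (j+1) t = Bq j t * (t - j) :=
  Finset.prod_range_succ _ _

lemma Bq_succ_shift (j : ℕ) (t : ℚ) : Bq (j+1) (t+1) = (t+1) * Bq j t := by
  rw [Bq, Bq, Finset.prod_range_succ']
  have h0 : (t + 1 - ((0:ℕ):ℚ)) = t + 1 := by push_cast; ring
  rw [h0, mul_comm]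
  congr 1
  apply Finset.prod_congr rfl
  intro s _
  push_cast
  ring

lemma hock (j : ℕ) (a b : ℕ) (hab : a ≤ b) :
    ((j:ℚ)+1) * ∑ t ∈ Finset.Ico a b, Bq j (t : ℚ) = Bq (j+1) (b : ℚ) - Bq (j+1) (a : ℚ) := by
  induction b, hab using Nat.le_induction with
  | base => simp
  | succ b hb ih =>
    rw [Finset.sum_Ico_succ_top hb, mul_add, ih]
    have hc : ((b+1 : ℕ):ℚ) = (b:ℚ)+1 := by push_cast; ring
    rw [hc, Bq_succ_shift, Bq_succ_top]
    ring

noncomputable def Bpoly (j : ℕ) : Polynomial ℚ :=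
  ∏ s ∈ Finset.range j, (Polynomial.X - Polynomial.C (s:ℚ))

lemma Bpoly_monic (j : ℕ) : (Bpoly j).Monic :=
  monic_prod_of_monic _ _ fun s _ => monic_X_sub_C _

lemma Bpoly_natDegree (j : ℕ) : (Bpoly j).natDegree = j := by
  rw [Bpoly, Polynomial.natDegree_prod]
  · have h : ∀ x : ℕ, x ∈ Finset.range j → (X - Polynomial.C ((x:ℚ))).natDegree = 1 :=
      fun x _ => Polynomial.natDegree_X_sub_C _
    rw [Finset.sum_congr rfl h]
    simp
  · intro s _
    exact (monic_X_sub_C ((s:ℚ))).ne_zero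

lemma Bpoly_eval (j : ℕ) (t : ℚ) : (Bpoly j).eval t = Bq j t := by
  rw [Bpoly, Polynomial.eval_prod, Bq]
  exact Finset.prod_congr rfl fun s _ => by simp

lemma det_Bq (m : ℕ) (v : Fin m → ℚ) :
    (Matrix.vandermonde v).det = (Matrix.of fun i j : Fin m => Bq (j:ℕ) (v i)).det := by
  rw [Matrix.det_eval_matrixOfPolynomials_eq_det_vandermonde v (fun j => Bpoly (j:ℕ))
    (fun j => Bpoly_natDegree (j:ℕ)) (fun j => Bpoly_monic (j:ℕ))]
  congr 1
  funext i j
  rw [Matrix.of_apply, Matrix.of_apply, Bpoly_eval]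

lemma det_sum_rows (m : ℕ) (A : Fin m → Finset ℕ) :
    ∑ w ∈ Fintype.piFinset A, (Matrix.of fun i j : Fin m => Bq (j:ℕ) ((w i : ℕ) : ℚ)).det
    = (Matrix.of fun i j : Fin m => ∑ t ∈ A i, Bq (j:ℕ) (t : ℚ)).det := by
  classical
  have h := MultilinearMap.map_sum_finset
    ((Matrix.detRowAlternating : (Fin m → ℚ) [⋀^Fin m]→ₗ[ℚ] ℚ).toMultilinearMap)
    (g := fun _ t => (fun j : Fin m => Bq (j:ℕ) ((t : ℕ) : ℚ))) (A := A)
  symm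
  have e1 : (Matrix.of fun i j : Fin m => ∑ t ∈ A i, Bq (j:ℕ) (t : ℚ)).det
      = (Matrix.detRowAlternating : (Fin m → ℚ) [⋀^Fin m]→ₗ[ℚ] ℚ).toMultilinearMap
          (fun i => ∑ t ∈ A i, (fun j : Fin m => Bq (j:ℕ) ((t : ℕ) : ℚ))) := by
    show (Matrix.of fun i j : Fin m => ∑ t ∈ A i, Bq (j:ℕ) (t : ℚ)).det
      = Matrix.detRowAlternating (fun i => ∑ t ∈ A i, (fun j : Fin m => Bq (j:ℕ) ((t : ℕ) : ℚ)))
    congr 1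
    funext i j
    simp [Finset.sum_apply]
  rw [e1, h]
  rfl

lemma det_telescope (n : ℕ) (Z : Fin (n+1) → ℚ) :
    (Matrix.of fun i j : Fin n => Bq ((j:ℕ)+1) (Z i.succ) - Bq ((j:ℕ)+1) (Z i.castSucc)).det
    = (Matrix.of fun i j : Fin (n+1) => Bq (j:ℕ) (Z i)).det := by
  classical
  set E : Matrix (Fin (n+1)) (Fin (n+1)) ℚ := Matrix.of fun i j : Fin (n+1) => Bq (j:ℕ) (Z i)
    with hE
  set L : Matrix (Fin (n+1)) (Fin (n+1)) ℚ :=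
    Matrix.of (fun i j => if i = j then 1 else if (j:ℕ)+1 = (i:ℕ) then (-1 : ℚ) else 0) with hL
  have hLdet : L.det = 1 := by
    rw [Matrix.det_of_lowerTriangular]
    · simp [hL]
    · intro i j hij
      have hij' : (i:ℕ) < (j:ℕ) := hij
      have h1 : ¬ (i = j) := by intro h; subst h; omega
      have h2 : ¬ ((j:ℕ)+1 = (i:ℕ)) := by omega
      simp [hL, h1, h2]
  have hrow0 : ∀ j, (L * E) 0 j = E 0 j := by
    intro j
    rw [Matrix.mul_apply]
    rw [Finset.sum_eq_single (0 : Fin (n+1))]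
    · simp [hL]
    · intro k _ hk
      have h1 : ¬ ((0 : Fin (n+1)) = k) := fun h => hk h.symm
      have h2 : ¬ ((k:ℕ)+1 = ((0 : Fin (n+1)):ℕ)) := by simp
      simp [hL, h1, h2]
    · simp
  have hrows : ∀ (i : Fin n) (j : Fin (n+1)), (L * E) i.succ j = E i.succ j - E i.castSucc j := by
    intro i j
    rw [Matrix.mul_apply]
    have hsplit : ∀ k : Fin (n+1), L i.succ k * E k j =
        (if k = i.succ then E k j else 0) + (if k = i.castSucc then -(E k j) else 0) := by
      intro k
      by_cases h1 : (k:ℕ) = (i:ℕ)+1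
      · have e1 : i.succ = k := Fin.ext (by simp [Fin.val_succ, h1])
        have ne1 : ¬ (k = i.castSucc) := by
          rw [Fin.ext_iff]
          simp only [Fin.coe_castSucc]
          omega
        rw [hL]
        simp only [Matrix.of_apply, if_pos e1, one_mul, if_pos e1.symm, if_neg ne1, add_zero]
      · by_cases h2 : (k:ℕ) = (i:ℕ)
        · have e2 : k = i.castSucc := Fin.ext (by simp [Fin.coe_castSucc, h2])
          have ne2 : ¬ (i.succ = k) := by
            rw [Fin.ext_iff]
            simp only [Fin.val_succ]
            omega
          have ne2' : ¬ (k = i.succ) := fun h => ne2 h.symm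
          have htrue : ((k:ℕ)+1 = ((i.succ : Fin (n+1)):ℕ)) := by
            simp only [Fin.val_succ]
            omega
          rw [hL]
          simp only [Matrix.of_apply, if_neg ne2, if_pos htrue, if_neg ne2', if_pos e2, zero_add]
          ring
        · have ne3 : ¬ (i.succ = k) := by
            rw [Fin.ext_iff]
            simp only [Fin.val_succ]
            omega
          have ne3' : ¬ (k = i.succ) := fun h => ne3 h.symm
          have ne4 : ¬ ((k:ℕ)+1 = ((i.succ : Fin (n+1)):ℕ)) := by
            simp only [Fin.val_succ]
            omega
          have ne5 : ¬ (k = i.castSucc) := by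
            rw [Fin.ext_iff]
            simp only [Fin.coe_castSucc]
            omega
          rw [hL]
          simp only [Matrix.of_apply, if_neg ne3, if_neg ne4, if_neg ne3', if_neg ne5,
            zero_mul, add_zero]
    rw [Finset.sum_congr rfl (fun k _ => hsplit k), Finset.sum_add_distrib]
    rw [Finset.sum_ite_eq' Finset.univ i.succ (fun k => E k j)]
    rw [Finset.sum_ite_eq' Finset.univ i.castSucc (fun k => -(E k j))]
    simp [sub_eq_add_neg]
  have hdetE : E.det = (L * E).det := by
    rw [Matrix.det_mul, hLdet, one_mul]
  have hexp : (L * E).det =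
      (Matrix.of fun i j : Fin n =>
        Bq ((j:ℕ)+1) (Z i.succ) - Bq ((j:ℕ)+1) (Z i.castSucc)).det := by
    rw [Matrix.det_succ_column_zero]
    rw [Finset.sum_eq_single (0 : Fin (n+1))]
    · rw [hrow0 0]
      have hE00 : E 0 0 = 1 := by simp [hE]
      rw [hE00]
      simp only [Fin.val_zero, pow_zero, one_mul, mul_one]
      congr 1
      funext i j
      have hsa : ((0 : Fin (n+1)).succAbove i) = i.succ := rfl
      rw [Matrix.submatrix_apply, hsa, hrows i j.succ]
      simp [hE, Fin.val_succ]
    · intro k _ hk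
      obtain ⟨k', rfl⟩ := Fin.eq_succ_of_ne_zero hk
      rw [hrows k' 0]
      have h9 : E k'.succ 0 = E k'.castSucc 0 := by simp [hE]
      rw [h9]
      ring
    · intro h
      exact absurd (Finset.mem_univ _) h
  exact hexp.symm.trans hdetE.symm


lemma prod_fin_factorial (n : ℕ) : ∏ j : Fin n, (((j:ℕ):ℚ)+1) = (Nat.factorial n : ℚ) := by
  induction n with
  | zero => simp
  | succ n ih =>
    rw [Fin.prod_univ_castSucc]
    simp only [Fin.coe_castSucc, Fin.val_last]
    rw [ih, Nat.factorial_succ]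
    push_cast
    ring

lemma key (n : ℕ) (Z : Fin (n+1) → ℕ) (hZ : ∀ i : Fin n, Z i.castSucc ≤ Z i.succ) :
    (Nat.factorial n : ℚ) *
      ∑ w ∈ Fintype.piFinset (fun i : Fin n => Finset.Ico (Z i.castSucc) (Z i.succ)),
        (Matrix.vandermonde fun i : Fin n => ((w i : ℕ) : ℚ)).det
    = (Matrix.vandermonde fun i : Fin (n+1) => ((Z i : ℕ) : ℚ)).det := by
  have h1 : ∑ w ∈ Fintype.piFinset (fun i : Fin n => Finset.Ico (Z i.castSucc) (Z i.succ)),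
      (Matrix.vandermonde fun i : Fin n => ((w i : ℕ) : ℚ)).det
      = ∑ w ∈ Fintype.piFinset (fun i : Fin n => Finset.Ico (Z i.castSucc) (Z i.succ)),
        (Matrix.of fun i j : Fin n => Bq (j:ℕ) ((w i : ℕ) : ℚ)).det :=
    Finset.sum_congr rfl fun w _ => det_Bq n _
  rw [h1, det_sum_rows]
  have h2 : (Matrix.of fun i j : Fin n =>
        ∑ t ∈ Finset.Ico (Z i.castSucc) (Z i.succ), Bq (j:ℕ) (t : ℚ)).det
      = (∏ j : Fin n, (((j:ℕ):ℚ)+1)⁻¹) *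
        (Matrix.of fun i j : Fin n =>
          Bq ((j:ℕ)+1) ((Z i.succ : ℕ):ℚ) - Bq ((j:ℕ)+1) ((Z i.castSucc : ℕ):ℚ)).det := by
    rw [← Matrix.det_mul_row (fun j : Fin n => (((j:ℕ):ℚ)+1)⁻¹)]
    congr 1
    funext i j
    rw [Matrix.of_apply, Matrix.of_apply, Matrix.of_apply]
    have hj : (((j:ℕ):ℚ)+1) ≠ 0 := by positivity
    have := hock (j:ℕ) (Z i.castSucc) (Z i.succ) (hZ i)
    field_simp
    linarith [this]
  rw [h2, det_telescope n (fun i => ((Z i : ℕ) : ℚ)), ← mul_assoc]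
  have h3 : (Nat.factorial n : ℚ) * (∏ j : Fin n, (((j:ℕ):ℚ)+1)⁻¹) = 1 := by
    rw [← prod_fin_factorial n, ← Finset.prod_mul_distrib]
    have hc : ∀ j : Fin n, j ∈ Finset.univ →
        (((j:ℕ):ℚ)+1) * (((j:ℕ):ℚ)+1)⁻¹ = 1 := by
      intro j _
      have : (((j:ℕ):ℚ)+1) ≠ 0 := by positivity
      field_simp
    rw [Finset.prod_congr rfl hc]
    simp
  rw [h3, one_mul]
  exact (det_Bq (n+1) _).symm


end det

/-! ### the main counting formula -/

def Zn (lam : ℕ → ℕ) (m : ℕ) : Fin m → ℕ := fun i => lam (m - (i:ℕ)) + (i:ℕ)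

theorem main_count : ∀ (n : ℕ) (lam : ℕ → ℕ), (∀ i, 1 ≤ i → lam (i+1) ≤ lam i) →
    (∀ i, n < i → lam i = 0) →
    (cnt lam n : ℚ) * ∏ j ∈ Finset.range n, (Nat.factorial j : ℚ)
      = (Matrix.vandermonde fun i : Fin n => ((Zn lam n i : ℕ) : ℚ)).det := by
  intro n
  induction n with
  | zero =>
    intro lam hA hS
    rw [cnt_zero lam (fun i hi => hS i (by omega))]
    simp [Matrix.det_fin_zero]
  | succ n ih =>
    intro lam hA hS
    rw [branch hA hS, Nat.cast_sum, Finset.prod_range_succ, Finset.sum_mul]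
    have hterm : ∀ y ∈ Fintype.piFinset
        (fun i : Fin n => Finset.Icc (lam ((i:ℕ)+2)) (lam ((i:ℕ)+1))),
        (cnt (toShape n y) n : ℚ) * (((∏ j ∈ Finset.range n, (Nat.factorial j : ℚ))) * (Nat.factorial n : ℚ))
        = (Matrix.vandermonde fun i : Fin n => ((Zn (toShape n y) n i : ℕ) : ℚ)).det * (Nat.factorial n : ℚ) := by
      intro y hy
      rw [Fintype.mem_piFinset] at hy
      have hy' : ∀ i : Fin n, lam ((i:ℕ)+2) ≤ y i ∧ y i ≤ lam ((i:ℕ)+1) := by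
        intro i; have := hy i; rwa [Finset.mem_Icc] at this
      have hA' : ∀ i, 1 ≤ i → toShape n y (i+1) ≤ toShape n y i := by
        intro i hi
        by_cases hin : i + 1 ≤ n
        · rw [toShape_pos n y (i+1) (by omega) hin, toShape_pos n y i hi (by omega)]
          have h1 := (hy' ⟨i + 1 - 1, by omega⟩).2
          have h2 := (hy' ⟨i - 1, by omega⟩).1
          have e1 : (i + 1 - 1) + 1 = i + 1 := by omega
          have e2 : (i - 1) + 2 = i + 1 := by omega
          rw [e1] at h1
          rw [e2] at h2
          exact le_trans h1 h2
        · rw [toShape_zero n y (i+1) (by omega)]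
          omega
      have hS' : ∀ i, n < i → toShape n y i = 0 := by
        intro i hi
        exact toShape_zero n y i (by omega)
      rw [← mul_assoc, ih (toShape n y) hA' hS']
    rw [Finset.sum_congr rfl hterm, ← Finset.sum_mul]
    have hre : ∑ y ∈ Fintype.piFinset
          (fun i : Fin n => Finset.Icc (lam ((i:ℕ)+2)) (lam ((i:ℕ)+1))),
        (Matrix.vandermonde fun t : Fin n => ((Zn (toShape n y) n t : ℕ) : ℚ)).det
        = ∑ w ∈ Fintype.piFinset
          (fun i : Fin n => Finset.Ico (Zn lam (n+1) i.castSucc) (Zn lam (n+1) i.succ)),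
        (Matrix.vandermonde fun t : Fin n => ((w t : ℕ) : ℚ)).det := by
      have hZc : ∀ i : Fin n, Zn lam (n+1) i.castSucc = lam (n + 1 - (i:ℕ)) + (i:ℕ) := by
        intro i; rfl
      have hZs : ∀ i : Fin n, Zn lam (n+1) i.succ = lam (n - (i:ℕ)) + (i:ℕ) + 1 := by
        intro i
        show lam ((n+1) - ((i:ℕ)+1)) + ((i:ℕ)+1) = _
        have e : (n+1) - ((i:ℕ)+1) = n - (i:ℕ) := by omega
        rw [e]
        omega
      apply Finset.sum_nbij'
        (i := fun y => fun t : Fin n => y (Fin.rev t) + (t:ℕ))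
        (j := fun w => fun t : Fin n => w (Fin.rev t) - ((Fin.rev t : Fin n):ℕ))
      · intro y hy
        rw [Fintype.mem_piFinset] at hy ⊢
        intro t
        have h1 := hy (Fin.rev t)
        rw [Finset.mem_Icc] at h1
        rw [Finset.mem_Ico, hZc, hZs]
        have ht : (t:ℕ) < n := t.isLt
        have hv : ((Fin.rev t : Fin n) : ℕ) = n - ((t:ℕ) + 1) := rfl
        have e1 : lam (((Fin.rev t : Fin n) : ℕ) + 2) = lam (n + 1 - (t:ℕ)) :=
          congrArg lam (by omega)
        have e2 : lam (((Fin.rev t : Fin n) : ℕ) + 1) = lam (n - (t:ℕ)) :=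
          congrArg lam (by omega)
        rw [e1, e2] at h1
        omega
      · intro w hw
        rw [Fintype.mem_piFinset] at hw ⊢
        intro t
        have h1 := hw (Fin.rev t)
        rw [Finset.mem_Ico, hZc, hZs] at h1
        rw [Finset.mem_Icc]
        have ht : (t:ℕ) < n := t.isLt
        have hv : ((Fin.rev t : Fin n) : ℕ) = n - ((t:ℕ) + 1) := rfl
        have e1 : lam (n + 1 - ((Fin.rev t : Fin n) : ℕ)) = lam ((t:ℕ) + 2) :=
          congrArg lam (by omega)
        have e2 : lam (n - ((Fin.rev t : Fin n) : ℕ)) = lam ((t:ℕ) + 1) :=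
          congrArg lam (by omega)
        rw [e1, e2] at h1
        omega
      · intro y hy
        funext t
        show y (Fin.rev (Fin.rev t)) + ((Fin.rev t : Fin n):ℕ) - ((Fin.rev t : Fin n):ℕ) = y t
        rw [Fin.rev_rev]
        omega
      · intro w hw
        funext t
        show w (Fin.rev (Fin.rev t)) - ((Fin.rev (Fin.rev t) : Fin n):ℕ) + (t:ℕ) = w t
        rw [Fin.rev_rev]
        rw [Fintype.mem_piFinset] at hw
        have h1 := hw t
        rw [Finset.mem_Ico, hZc] at h1
        omega
      · intro y hy
        have hfun : (fun t : Fin n => ((Zn (toShape n y) n t : ℕ) : ℚ))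
            = fun t : Fin n => (((y (Fin.rev t) + (t:ℕ) : ℕ)) : ℚ) := by
          funext t
          have ht : (t:ℕ) < n := t.isLt
          have hnat : Zn (toShape n y) n t = y (Fin.rev t) + (t:ℕ) := by
            have e1 : Zn (toShape n y) n t = toShape n y (n - (t:ℕ)) + (t:ℕ) := rfl
            rw [e1, toShape_pos n y (n - (t:ℕ)) (by omega) (by omega)]
            have hv : ((Fin.rev t : Fin n) : ℕ) = n - ((t:ℕ) + 1) := rfl
            have e2 : (⟨n - (t:ℕ) - 1, by omega⟩ : Fin n) = Fin.rev t := by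
              apply Fin.ext
              show n - (t:ℕ) - 1 = n - ((t:ℕ) + 1)
              omega
            rw [e2]
          rw [hnat]
        exact congrArg (fun v : Fin n → ℚ => (Matrix.vandermonde v).det) hfun
    rw [hre]
    have hZle : ∀ i : Fin n, Zn lam (n+1) i.castSucc ≤ Zn lam (n+1) i.succ := by
      intro i
      show lam ((n+1) - (i:ℕ)) + (i:ℕ) ≤ lam ((n+1) - ((i:ℕ)+1)) + ((i:ℕ)+1)
      have ht : (i:ℕ) < n := i.isLt
      have e1 : (n+1) - (i:ℕ) = (n - (i:ℕ)) + 1 := by omega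
      have e2 : (n+1) - ((i:ℕ)+1) = n - (i:ℕ) := by omega
      rw [e1, e2]
      have := hA (n - (i:ℕ)) (by omega)
      omega
    rw [mul_comm]
    exact key n (Zn lam (n+1)) hZle

/-! ### staircase specialization -/

def stair (k : ℕ) : ℕ → ℕ := fun i => k - i

noncomputable def V (k n : ℕ) : ℚ :=
  (Matrix.vandermonde fun i : Fin n => ((Zn (stair k) n i : ℕ) : ℚ)).det

lemma V_pos (k n : ℕ) : 0 < V k n := by
  rw [V, Matrix.det_vandermonde]
  apply Finset.prod_pos
  intro i _
  apply Finset.prod_pos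
  intro j hj
  rw [Finset.mem_Ioi] at hj
  have hij : (i:ℕ) < (j:ℕ) := hj
  have h1 : Zn (stair k) n i < Zn (stair k) n j := by
    show stair k (n - (i:ℕ)) + (i:ℕ) < stair k (n - (j:ℕ)) + (j:ℕ)
    show k - (n - (i:ℕ)) + (i:ℕ) < k - (n - (j:ℕ)) + (j:ℕ)
    omega
  have : ((Zn (stair k) n i : ℕ):ℚ) < ((Zn (stair k) n j : ℕ):ℚ) := by
    exact_mod_cast h1
  linarith

lemma V_step (m n : ℕ) (h : m ≤ n + 1) :
    V m (n+1) = V m n * ∏ i : Fin n, (((Zn (stair m) n i : ℕ):ℚ) + 1) := by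
  have h0 : (Zn (stair m) (n+1) 0 : ℕ) = 0 := by
    show m - ((n+1) - 0) + 0 = 0
    omega
  have hsucc : ∀ i : Fin n, (Zn (stair m) (n+1) i.succ : ℕ) = Zn (stair m) n i + 1 := by
    intro i
    show m - ((n+1) - ((i:ℕ)+1)) + ((i:ℕ)+1) = (m - (n - (i:ℕ)) + (i:ℕ)) + 1
    omega
  rw [V, Matrix.det_vandermonde, Fin.prod_univ_succ, Fin.prod_Ioi_zero]
  have h1 : ∀ j : Fin n, ((Zn (stair m) (n+1) j.succ : ℕ):ℚ) - ((Zn (stair m) (n+1) 0 : ℕ):ℚ)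
      = ((Zn (stair m) n j : ℕ):ℚ) + 1 := by
    intro j
    rw [hsucc j, h0]
    push_cast
    ring
  rw [Finset.prod_congr rfl (fun j _ => h1 j)]
  have h2 : ∀ i : Fin n, (∏ j ∈ Finset.Ioi i.succ,
        (((Zn (stair m) (n+1) j:ℕ):ℚ) - ((Zn (stair m) (n+1) i.succ:ℕ):ℚ)))
      = ∏ j ∈ Finset.Ioi i, (((Zn (stair m) n j:ℕ):ℚ) - ((Zn (stair m) n i:ℕ):ℚ)) := by
    intro i
    rw [Fin.prod_Ioi_succ]
    apply Finset.prod_congr rfl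
    intro j _
    rw [hsucc j, hsucc i]
    push_cast
    ring
  rw [Finset.prod_congr rfl (fun i _ => h2 i), V, Matrix.det_vandermonde]
  ring

lemma oddfact (k : ℕ) : ((2*k).factorial : ℚ)
    = 2^k * (Nat.factorial k : ℚ) * ∏ i ∈ Finset.range k, (2*(i:ℚ)+1) := by
  induction k with
  | zero => simp
  | succ k ih =>
    have e1 : 2*(k+1) = (2*k+1)+1 := by omega
    rw [e1, Nat.factorial_succ, Nat.factorial_succ, Nat.factorial_succ, Finset.prod_range_succ]
    push_cast
    rw [ih]
    push_cast
    ring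

lemma P_swap (k n : ℕ) (hk : k ≤ n) :
    (∏ i : Fin n, (((Zn (stair (k+1)) n i : ℕ):ℚ) + 1)) *
      ∏ i ∈ Finset.range k, ((n:ℚ) - (k:ℚ) + 1 + 2*(i:ℚ))
    = (∏ i : Fin n, (((Zn (stair k) n i : ℕ):ℚ) + 1)) *
      ∏ i ∈ Finset.range k, ((n:ℚ) - (k:ℚ) + 2 + 2*(i:ℚ)) := by
  have hfin : ∀ m : ℕ, ∏ i : Fin n, (((Zn (stair m) n i : ℕ):ℚ) + 1)
      = ∏ i ∈ Finset.range n, (((m - (n - i) + i : ℕ):ℚ) + 1) := by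
    intro m
    exact Fin.prod_univ_eq_prod_range (fun i => (((m - (n - i) + i : ℕ):ℚ) + 1)) n
  rw [hfin, hfin]
  have hnk : n = (n - k) + k := by omega
  rw [hnk]
  rw [Finset.prod_range_add, Finset.prod_range_add]
  have hfirst : ∀ i ∈ Finset.range ((n-k)), ((((k+1) - (((n-k)+k) - i) + i : ℕ):ℚ) + 1)
      = (((k - (((n-k)+k) - i) + i : ℕ):ℚ) + 1) := by
    intro i hi
    rw [Finset.mem_range] at hi
    have e : (k+1) - (((n-k)+k) - i) + i = k - (((n-k)+k) - i) + i := by omega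
    rw [e]
  rw [Finset.prod_congr rfl hfirst]
  have hsecA : ∀ t ∈ Finset.range k, ((((k+1) - (((n-k)+k) - ((n-k)+t)) + ((n-k)+t) : ℕ):ℚ) + 1)
      = ((n:ℚ) - (k:ℚ) + 2 + 2*(t:ℚ)) := by
    intro t ht
    rw [Finset.mem_range] at ht
    have e : (k+1) - (((n-k)+k) - ((n-k)+t)) + ((n-k)+t) = (n - k) + 2*t + 1 := by omega
    rw [e]
    have e2 : (((n - k) + 2*t + 1 : ℕ):ℚ) = ((n:ℚ) - (k:ℚ)) + 2*(t:ℚ) + 1 := by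
      push_cast [Nat.cast_sub hk]
      ring
    rw [e2]
    ring
  have hsecB : ∀ t ∈ Finset.range k, (((k - (((n-k)+k) - ((n-k)+t)) + ((n-k)+t) : ℕ):ℚ) + 1)
      = ((n:ℚ) - (k:ℚ) + 1 + 2*(t:ℚ)) := by
    intro t ht
    rw [Finset.mem_range] at ht
    have e : k - (((n-k)+k) - ((n-k)+t)) + ((n-k)+t) = (n - k) + 2*t := by omega
    rw [e]
    have e2 : (((n - k) + 2*t : ℕ):ℚ) = ((n:ℚ) - (k:ℚ)) + 2*(t:ℚ) := by
      push_cast [Nat.cast_sub hk]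
      ring
    rw [e2]
    ring
  rw [Finset.prod_congr rfl hsecA, Finset.prod_congr rfl hsecB]
  have hP1 : ∏ i ∈ Finset.range k, ((((n-k)+k : ℕ):ℚ) - (k:ℚ) + 1 + 2*(i:ℚ))
      = ∏ i ∈ Finset.range k, ((n:ℚ) - (k:ℚ) + 1 + 2*(i:ℚ)) := by
    apply Finset.prod_congr rfl
    intro i _
    have : (((n-k)+k : ℕ):ℚ) = (n:ℚ) := by
      push_cast [Nat.cast_sub hk]
      ring
    rw [this]
  have hP2 : ∏ i ∈ Finset.range k, ((((n-k)+k : ℕ):ℚ) - (k:ℚ) + 2 + 2*(i:ℚ))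
      = ∏ i ∈ Finset.range k, ((n:ℚ) - (k:ℚ) + 2 + 2*(i:ℚ)) := by
    apply Finset.prod_congr rfl
    intro i _
    have : (((n-k)+k : ℕ):ℚ) = (n:ℚ) := by
      push_cast [Nat.cast_sub hk]
      ring
    rw [this]
  rw [hP1, hP2]
  ring

lemma V_ratio (k : ℕ) : ∀ n, k ≤ n →
    V (k+1) n * ((2*k).factorial : ℚ)
      = V k n * 2^k * (Nat.factorial k : ℚ) *
        ∏ i ∈ Finset.range k, ((n:ℚ) - (k:ℚ) + 1 + 2*(i:ℚ)) := by
  refine Nat.le_induction ?_ ?_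
  · -- base n = k
    have hVV : V (k+1) k = V k k := by
      rw [V, V, Matrix.det_vandermonde, Matrix.det_vandermonde]
      apply Finset.prod_congr rfl
      intro i _
      apply Finset.prod_congr rfl
      intro j hj
      have hi : (i:ℕ) < k := i.isLt
      have hjk : (j:ℕ) < k := j.isLt
      have e1 : (Zn (stair (k+1)) k j : ℕ) = 2*(j:ℕ)+1 := by
        show (k+1) - (k - (j:ℕ)) + (j:ℕ) = 2*(j:ℕ)+1
        omega
      have e2 : (Zn (stair (k+1)) k i : ℕ) = 2*(i:ℕ)+1 := by
        show (k+1) - (k - (i:ℕ)) + (i:ℕ) = 2*(i:ℕ)+1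
        omega
      have e3 : (Zn (stair k) k j : ℕ) = 2*(j:ℕ) := by
        show k - (k - (j:ℕ)) + (j:ℕ) = 2*(j:ℕ)
        omega
      have e4 : (Zn (stair k) k i : ℕ) = 2*(i:ℕ) := by
        show k - (k - (i:ℕ)) + (i:ℕ) = 2*(i:ℕ)
        omega
      rw [e1, e2, e3, e4]
      push_cast
      ring
    rw [hVV, oddfact]
    have hP : ∏ i ∈ Finset.range k, ((k:ℚ) - (k:ℚ) + 1 + 2*(i:ℚ))
        = ∏ i ∈ Finset.range k, (2*(i:ℚ)+1) := by
      apply Finset.prod_congr rfl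
      intro i _
      ring
    rw [hP]
    ring
  · -- step
    intro n hn ih
    rw [V_step (k+1) n (by omega), V_step k n (by omega)]
    have hswap := P_swap k n hn
    have target : ∀ i : ℕ, ((n:ℚ) + 1 - (k:ℚ) + 1 + 2*(i:ℚ)) = ((n:ℚ) - (k:ℚ) + 2 + 2*(i:ℚ)) := by
      intro i; ring
    have hP : ∏ i ∈ Finset.range k, (((n+1 : ℕ):ℚ) - (k:ℚ) + 1 + 2*(i:ℚ))
        = ∏ i ∈ Finset.range k, ((n:ℚ) - (k:ℚ) + 2 + 2*(i:ℚ)) := by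
      apply Finset.prod_congr rfl
      intro i _
      push_cast
      ring
    rw [hP]
    calc V (k+1) n * (∏ i : Fin n, (((Zn (stair (k+1)) n i : ℕ):ℚ) + 1)) * ((2*k).factorial : ℚ)
        = (V (k+1) n * ((2*k).factorial : ℚ)) *
            (∏ i : Fin n, (((Zn (stair (k+1)) n i : ℕ):ℚ) + 1)) := by ring
      _ = (V k n * 2^k * (Nat.factorial k : ℚ) *
            ∏ i ∈ Finset.range k, ((n:ℚ) - (k:ℚ) + 1 + 2*(i:ℚ))) *
            (∏ i : Fin n, (((Zn (stair (k+1)) n i : ℕ):ℚ) + 1)) := by rw [ih]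
      _ = (V k n * 2^k * (Nat.factorial k : ℚ)) *
            ((∏ i : Fin n, (((Zn (stair (k+1)) n i : ℕ):ℚ) + 1)) *
             ∏ i ∈ Finset.range k, ((n:ℚ) - (k:ℚ) + 1 + 2*(i:ℚ))) := by ring
      _ = (V k n * 2^k * (Nat.factorial k : ℚ)) *
            ((∏ i : Fin n, (((Zn (stair k) n i : ℕ):ℚ) + 1)) *
             ∏ i ∈ Finset.range k, ((n:ℚ) - (k:ℚ) + 2 + 2*(i:ℚ))) := by rw [hswap]
      _ = V k n * (∏ i : Fin n, (((Zn (stair k) n i : ℕ):ℚ) + 1)) * 2^k *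
            (Nat.factorial k : ℚ) *
            ∏ i ∈ Finset.range k, ((n:ℚ) - (k:ℚ) + 2 + 2*(i:ℚ)) := by ring

end SSTwork



/-- `(i,j)` (1-indexed) is a box of the Young diagram of the staircase `δ_k`. -/
def StairBox (k : ℕ) (p : ℕ × ℕ) : Prop := 1 ≤ p.1 ∧ 1 ≤ p.2 ∧ p.1 + p.2 ≤ k

/-- `T` is a semistandard Young tableau of staircase shape `δ_k` with entries in `{1,…,n}`:
entries lie in `{1,…,n}` on boxes, vanish off boxes, weakly increase along rows, and
strictly increase down columns. -/
def IsSSTStair (k n : ℕ) (T : ℕ × ℕ → ℕ) : Prop :=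
  (∀ p, StairBox k p → 1 ≤ T p ∧ T p ≤ n) ∧
  (∀ p, ¬ StairBox k p → T p = 0) ∧
  (∀ p q, StairBox k p → StairBox k q → q.1 = p.1 → q.2 = p.2 + 1 → T p ≤ T q) ∧
  (∀ p q, StairBox k p → StairBox k q → q.1 = p.1 + 1 → q.2 = p.2 → T p < T q)

/-- The number of semistandard Young tableaux of shape `δ_k` with entries in `{1,…,n}`. -/
noncomputable def SSTcard (k n : ℕ) : ℕ := Nat.card {T : ℕ × ℕ → ℕ // IsSSTStair k n T}

/-- Generalized binomial coefficient `binom(x, m) = x(x-1)⋯(x-m+1)/m!`. -/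
def genBinom (x : ℚ) (m : ℕ) : ℚ := (∏ i ∈ Finset.range m, (x - i)) / (Nat.factorial m)

/-- The Jacobi polynomial
`P_k^{(a,b)}(z) = Σ_{r=0}^{k} binom(k+a, k-r) binom(k+b, r) ((z-1)/2)^r ((z+1)/2)^{k-r}`. -/
def jacobiP (k : ℕ) (a b z : ℚ) : ℚ :=
  ∑ r ∈ Finset.range (k + 1),
    genBinom ((k : ℚ) + a) (k - r) * genBinom ((k : ℚ) + b) r *
      ((z - 1) / 2) ^ r * ((z + 1) / 2) ^ (k - r)

lemma sstcard_eq_cnt (k n : ℕ) : SSTcard k n = SSTwork.cnt (SSTwork.stair k) n := by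
  have hbox : StairBox k = SSTwork.Box (SSTwork.stair k) := by
    funext p
    apply propext
    show (1 ≤ p.1 ∧ 1 ≤ p.2 ∧ p.1 + p.2 ≤ k) ↔ (1 ≤ p.1 ∧ 1 ≤ p.2 ∧ p.2 ≤ k - p.1)
    omega
  have hpred : IsSSTStair k n = SSTwork.IsSST (SSTwork.stair k) n := by
    funext T
    simp only [IsSSTStair, SSTwork.IsSST, hbox]
  rw [SSTcard, SSTwork.cnt, hpred]

lemma jacobi_eval (k n : ℕ) :
    jacobiP k (((n:ℚ) - k - 1)/2) ((-(n:ℚ) - k - 1)/2) (-1)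
    = (∏ i ∈ Finset.range k, ((n:ℚ) - (k:ℚ) + 1 + 2*(i:ℚ))) /
        (2^k * (Nat.factorial k : ℚ)) := by
  rw [jacobiP, Finset.sum_eq_single k]
  · rw [Nat.sub_self]
    have hg0 : genBinom ((k:ℚ) + ((n:ℚ) - k - 1)/2) 0 = 1 := by
      simp [genBinom, Nat.factorial]
    rw [hg0, one_mul]
    have hz1 : ((-1 : ℚ) + 1)/2 = 0 := by norm_num
    have hz2 : ((-1 : ℚ) - 1)/2 = -1 := by norm_num
    rw [hz1, hz2, pow_zero, mul_one]
    rw [genBinom]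
    have hprod : (∏ i ∈ Finset.range k, (((k:ℚ) + (-(n:ℚ) - (k:ℚ) - 1)/2) - (i:ℚ))) * (-1:ℚ)^k
        = (∏ i ∈ Finset.range k, ((n:ℚ) - (k:ℚ) + 1 + 2*(i:ℚ))) / 2^k := by
      rw [show ((-1:ℚ)^k) = ∏ _i ∈ Finset.range k, (-1:ℚ) by simp]
      rw [← Finset.prod_mul_distrib]
      rw [show ((2:ℚ)^k) = ∏ _i ∈ Finset.range k, (2:ℚ) by simp]
      rw [← Finset.prod_div_distrib]
      apply Finset.prod_congr rfl
      intro i _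
      ring
    calc (∏ i ∈ Finset.range k, (((k:ℚ) + (-(n:ℚ) - (k:ℚ) - 1)/2) - (i:ℚ))) /
          (Nat.factorial k : ℚ) * (-1:ℚ)^k
        = ((∏ i ∈ Finset.range k, (((k:ℚ) + (-(n:ℚ) - (k:ℚ) - 1)/2) - (i:ℚ))) * (-1:ℚ)^k) /
          (Nat.factorial k : ℚ) := by ring
      _ = ((∏ i ∈ Finset.range k, ((n:ℚ) - (k:ℚ) + 1 + 2*(i:ℚ))) / 2^k) /
          (Nat.factorial k : ℚ) := by rw [hprod]
      _ = (∏ i ∈ Finset.range k, ((n:ℚ) - (k:ℚ) + 1 + 2*(i:ℚ))) /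
          (2^k * (Nat.factorial k : ℚ)) := by ring
  · intro r hr hrk
    have hz : ((-1 : ℚ) + 1)/2 = 0 := by norm_num
    rw [hz]
    rw [Finset.mem_range] at hr
    rw [zero_pow (by omega : k - r ≠ 0)]
    ring
  · intro hkk
    exact absurd (Finset.mem_range.2 (by omega)) hkk

/-- For `1 ≤ k ≤ n`, `|SST(δ_k, n)| ≠ 0` and
`|SST(δ_{k+1}, n)| / |SST(δ_k, n)| = (2^{2k} (k!)² / (2k)!) · P_k^{(α,β)}(-1)` with
`α = (n-k-1)/2`, `β = (-n-k-1)/2`. -/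
theorem sst_staircase_ratio_jacobi (k n : ℕ) (hk : 1 ≤ k) (hkn : k ≤ n) :
    SSTcard k n ≠ 0 ∧
      (SSTcard (k + 1) n : ℚ) / (SSTcard k n : ℚ)
        = 2 ^ (2 * k) * (Nat.factorial k : ℚ) ^ 2 / (Nat.factorial (2 * k) : ℚ) *
            jacobiP k (((n : ℚ) - k - 1) / 2) ((-(n : ℚ) - k - 1) / 2) (-1) := by
  have hA1 : ∀ i, 1 ≤ i → SSTwork.stair k (i+1) ≤ SSTwork.stair k i := by
    intro i _
    show k - (i+1) ≤ k - i
    omega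
  have hA2 : ∀ i, 1 ≤ i → SSTwork.stair (k+1) (i+1) ≤ SSTwork.stair (k+1) i := by
    intro i _
    show (k+1) - (i+1) ≤ (k+1) - i
    omega
  have hS1 : ∀ i, n < i → SSTwork.stair k i = 0 := by
    intro i hi
    show k - i = 0
    omega
  have hS2 : ∀ i, n < i → SSTwork.stair (k+1) i = 0 := by
    intro i hi
    show (k+1) - i = 0
    omega
  have hc0 : (SSTwork.cnt (SSTwork.stair k) n : ℚ) *
      ∏ j ∈ Finset.range n, (Nat.factorial j : ℚ) = SSTwork.V k n :=
    SSTwork.main_count n (SSTwork.stair k) hA1 hS1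
  have hc1 : (SSTwork.cnt (SSTwork.stair (k+1)) n : ℚ) *
      ∏ j ∈ Finset.range n, (Nat.factorial j : ℚ) = SSTwork.V (k+1) n :=
    SSTwork.main_count n (SSTwork.stair (k+1)) hA2 hS2
  have hF : (0:ℚ) < ∏ j ∈ Finset.range n, (Nat.factorial j : ℚ) := by
    apply Finset.prod_pos
    intro j _
    exact_mod_cast Nat.factorial_pos j
  have hFne : (∏ j ∈ Finset.range n, (Nat.factorial j : ℚ)) ≠ 0 := ne_of_gt hF
  have hV0 := SSTwork.V_pos k n
  have hV1 := SSTwork.V_pos (k+1) n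
  have hV0ne : SSTwork.V k n ≠ 0 := ne_of_gt hV0
  have hcnt0 : SSTwork.cnt (SSTwork.stair k) n ≠ 0 := by
    intro h
    rw [h] at hc0
    simp at hc0
    rw [← hc0] at hV0
    exact lt_irrefl _ hV0
  constructor
  · rw [sstcard_eq_cnt]
    exact hcnt0
  · rw [sstcard_eq_cnt, sstcard_eq_cnt, jacobi_eval k n]
    have hc0' : (SSTwork.cnt (SSTwork.stair k) n : ℚ)
        = SSTwork.V k n / ∏ j ∈ Finset.range n, (Nat.factorial j : ℚ) := by
      rw [eq_div_iff hFne]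
      exact hc0
    have hc1' : (SSTwork.cnt (SSTwork.stair (k+1)) n : ℚ)
        = SSTwork.V (k+1) n / ∏ j ∈ Finset.range n, (Nat.factorial j : ℚ) := by
      rw [eq_div_iff hFne]
      exact hc1
    rw [hc0', hc1', div_div_div_comm, div_self hFne, div_one]
    have hVr := SSTwork.V_ratio k n hkn
    have h2k : ((2*k).factorial : ℚ) ≠ 0 := Nat.cast_ne_zero.2 (Nat.factorial_ne_zero _)
    have hkf : ((k.factorial : ℕ) : ℚ) ≠ 0 := Nat.cast_ne_zero.2 (Nat.factorial_ne_zero _)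
    have h2p : ((2:ℚ))^k ≠ 0 := by positivity
    field_simp
    linear_combination ((2:ℚ)^k) * hVr
end
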